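/- arXiv:2405.02441 — 2 statements merged into one kernel-verified Lean document; each statement's English description precedes it below -/
import Mathlib

section
/- Among all positive definite matrices C with det(C) = v > 0, if y ~ N(μ, Σ), the probability Pr[y ∈ E(μ', C)] over all centers μ' and shapes C with det(C) = v is uniquely maximized by μ' = μ and C = κΣ where κ = (v/det Σ)^{1/n}. -/
open MeasureTheory Matrix ENNReal

noncomputable def ellipsoid {n : ℕ} (μ : Fin n → ℝ) (C : Matrix (Fin n) (Fin n) ℝ) :
    Set (Fin n → ℝ) :=
  {y | (y - μ) ⬝ᵥ (C⁻¹ *ᵥ (y - μ)) ≤ 1}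

namespace GaussAux

open Set Bornology Filter

variable {n : ℕ}

/-- The quadratic form of a matrix. -/
noncomputable def quad (M : Matrix (Fin n) (Fin n) ℝ) (z : Fin n → ℝ) : ℝ := z ⬝ᵥ (M *ᵥ z)

lemma ellipsoid_def (p : Fin n → ℝ) (C : Matrix (Fin n) (Fin n) ℝ) :
    ellipsoid p C = {y | quad C⁻¹ (y - p) ≤ 1} := rfl

lemma quad_smul (M : Matrix (Fin n) (Fin n) ℝ) (t : ℝ) (z : Fin n → ℝ) :
    quad M (t • z) = t ^ 2 * quad M z := by
  simp [quad, mulVec_smul, dotProduct_smul, smul_dotProduct, smul_smul, sq, mul_assoc]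

lemma quad_neg (M : Matrix (Fin n) (Fin n) ℝ) (z : Fin n → ℝ) :
    quad M (-z) = quad M z := by
  simp [quad, mulVec_neg, dotProduct_neg, neg_dotProduct]

lemma quad_zero (M : Matrix (Fin n) (Fin n) ℝ) : quad M 0 = 0 := by simp [quad]

lemma continuous_quad (M : Matrix (Fin n) (Fin n) ℝ) (p : Fin n → ℝ) :
    Continuous fun y : Fin n → ℝ => quad M (y - p) := by
  unfold quad dotProduct mulVec
  apply continuous_finset_sum
  intro i _
  apply Continuous.mul
  · fun_prop
  · unfold dotProduct
    apply continuous_finset_sum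
    intro j _
    fun_prop

lemma quad_smul_mat (c : ℝ) (M : Matrix (Fin n) (Fin n) ℝ) (z : Fin n → ℝ) :
    quad (c • M) z = c * quad M z := by
  simp [quad, smul_mulVec, dotProduct_smul]

lemma quad_pos {M : Matrix (Fin n) (Fin n) ℝ} (hM : M.PosDef) {z : Fin n → ℝ} (hz : z ≠ 0) :
    0 < quad M z := by
  simpa [quad] using hM.dotProduct_mulVec_pos hz

lemma quad_nonneg {M : Matrix (Fin n) (Fin n) ℝ} (hM : M.PosDef) (z : Fin n → ℝ) :
    0 ≤ quad M z := by
  simpa [quad] using hM.posSemidef.dotProduct_mulVec_nonneg z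

lemma transpose_eq_of_herm {M : Matrix (Fin n) (Fin n) ℝ} (h : M.IsHermitian) : Mᵀ = M := by
  rw [← conjTranspose_eq_transpose_of_trivial]; exact h

lemma isClosed_ellipsoid (p : Fin n → ℝ) (C : Matrix (Fin n) (Fin n) ℝ) :
    IsClosed (ellipsoid p C) := by
  rw [ellipsoid_def]
  exact IsClosed.preimage (continuous_quad C⁻¹ p) isClosed_Iic

lemma measurableSet_ellipsoid (p : Fin n → ℝ) (C : Matrix (Fin n) (Fin n) ℝ) :
    MeasurableSet (ellipsoid p C) :=
  (isClosed_ellipsoid p C).measurableSet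

section sqrtrep
variable {C : Matrix (Fin n) (Fin n) ℝ}

open scoped MatrixOrder in
/-- Square root of a positive semidefinite matrix. -/
noncomputable def _root_.Matrix.PosSemidef.sqrt (_h : C.PosSemidef) : Matrix (Fin n) (Fin n) ℝ :=
  CFC.sqrt C

open scoped MatrixOrder in
lemma _root_.Matrix.PosSemidef.sqrt_mul_self (h : C.PosSemidef) : h.sqrt * h.sqrt = C :=
  CFC.sqrt_mul_sqrt_self C h.nonneg

open scoped MatrixOrder in
lemma _root_.Matrix.PosSemidef.posSemidef_sqrt (h : C.PosSemidef) : h.sqrt.PosSemidef :=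
  Matrix.nonneg_iff_posSemidef.mp (CFC.sqrt_nonneg C)

lemma sqrt_det_ne_zero (hC : C.PosDef) : (hC.posSemidef.sqrt).det ≠ 0 := by
  intro h
  have h2 : hC.posSemidef.sqrt * hC.posSemidef.sqrt = C := hC.posSemidef.sqrt_mul_self
  have := hC.det_pos
  rw [← h2, det_mul, h, mul_zero] at this
  exact lt_irrefl _ this

lemma sqrt_det_nonneg (hC : C.PosDef) : 0 ≤ (hC.posSemidef.sqrt).det := by
  exact hC.posSemidef.posSemidef_sqrt.det_nonneg

lemma sqrt_det_eq (hC : C.PosDef) : (hC.posSemidef.sqrt).det = Real.sqrt C.det := by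
  have h2 : hC.posSemidef.sqrt.det * hC.posSemidef.sqrt.det = C.det := by
    rw [← det_mul, hC.posSemidef.sqrt_mul_self]
  rw [← h2, Real.sqrt_mul_self (sqrt_det_nonneg hC)]

lemma sqrt_transpose (hC : C.PosDef) : (hC.posSemidef.sqrt)ᵀ = hC.posSemidef.sqrt :=
  transpose_eq_of_herm hC.posSemidef.posSemidef_sqrt.1

lemma quad_sqrt_mulVec (hC : C.PosDef) (u : Fin n → ℝ) :
    quad C⁻¹ (hC.posSemidef.sqrt *ᵥ u) = u ⬝ᵥ u := by
  set Q := hC.posSemidef.sqrt with hQ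
  have hdet : IsUnit Q.det := (Ne.isUnit (sqrt_det_ne_zero hC))
  have hCinv : C⁻¹ = Q⁻¹ * Q⁻¹ := by
    rw [← hC.posSemidef.sqrt_mul_self, Matrix.mul_inv_rev]
  have key : Qᵀ * (C⁻¹ * Q) = 1 := by
    rw [hCinv, sqrt_transpose hC, Matrix.mul_assoc, Matrix.nonsing_inv_mul _ hdet,
      Matrix.mul_one, Matrix.mul_nonsing_inv _ hdet]
  calc (Q *ᵥ u) ⬝ᵥ (C⁻¹ *ᵥ (Q *ᵥ u))
      = (Q *ᵥ u) ⬝ᵥ ((C⁻¹ * Q) *ᵥ u) := by rw [mulVec_mulVec]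
    _ = (u ᵥ* Qᵀ) ⬝ᵥ ((C⁻¹ * Q) *ᵥ u) := by rw [vecMul_transpose]
    _ = ((u ᵥ* Qᵀ) ᵥ* (C⁻¹ * Q)) ⬝ᵥ u := by rw [dotProduct_mulVec]
    _ = (u ᵥ* (Qᵀ * (C⁻¹ * Q))) ⬝ᵥ u := by rw [vecMul_vecMul]
    _ = u ⬝ᵥ u := by rw [key, vecMul_one]

lemma ellipsoid_image (hC : C.PosDef) (p : Fin n → ℝ) :
    ellipsoid p C = (fun u => p + hC.posSemidef.sqrt *ᵥ u) '' {u | u ⬝ᵥ u ≤ 1} := by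
  set Q := hC.posSemidef.sqrt with hQ
  have hdet : IsUnit Q.det := (Ne.isUnit (sqrt_det_ne_zero hC))
  ext y
  constructor
  · intro hy
    refine ⟨Q⁻¹ *ᵥ (y - p), ?_, ?_⟩
    · have h1 : Q *ᵥ (Q⁻¹ *ᵥ (y - p)) = y - p := by
        rw [mulVec_mulVec, Matrix.mul_nonsing_inv _ hdet, one_mulVec]
      have h2 := quad_sqrt_mulVec hC (Q⁻¹ *ᵥ (y - p))
      rw [h1] at h2
      simpa [Set.mem_setOf_eq, ← h2] using (show quad C⁻¹ (y - p) ≤ 1 from hy)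
    · show p + Q *ᵥ (Q⁻¹ *ᵥ (y - p)) = y
      rw [mulVec_mulVec, Matrix.mul_nonsing_inv _ hdet, one_mulVec]
      abel
  · rintro ⟨u, hu, rfl⟩
    show quad C⁻¹ (p + Q *ᵥ u - p) ≤ 1
    rw [add_sub_cancel_left, quad_sqrt_mulVec hC]
    exact hu

lemma volume_translate (p : Fin n → ℝ) (s : Set (Fin n → ℝ)) :
    volume ((fun y => p + y) '' s) = volume s := by
  have h : (fun y => p + y) '' s = (fun y => -p + y) ⁻¹' s := by
    ext y
    constructor
    · rintro ⟨x, hx, rfl⟩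
      simpa [neg_add_cancel_left] using hx
    · intro h
      exact ⟨-p + y, h, by simp⟩
  rw [h, measure_preimage_add]

lemma volume_mulVec_image (Q : Matrix (Fin n) (Fin n) ℝ) (K : Set (Fin n → ℝ)) :
    volume ((fun u => Q *ᵥ u) '' K) = ENNReal.ofReal |Q.det| * volume K := by
  have h : (fun u => Q *ᵥ u) = ⇑(Matrix.toLin' Q) := by
    ext u i
    rw [Matrix.toLin'_apply]
  rw [h, Measure.addHaar_image_linearMap, LinearMap.det_toLin']

lemma volume_ellipsoid (hC : C.PosDef) (p : Fin n → ℝ) :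
    volume (ellipsoid p C)
      = ENNReal.ofReal (Real.sqrt C.det) * volume {u : Fin n → ℝ | u ⬝ᵥ u ≤ 1} := by
  rw [ellipsoid_image hC p, ← Set.image_image (fun y => p + y) (fun u => hC.posSemidef.sqrt *ᵥ u),
    volume_translate, volume_mulVec_image, sqrt_det_eq hC, abs_of_nonneg (Real.sqrt_nonneg _)]

lemma isBounded_unitK : IsBounded {u : Fin n → ℝ | u ⬝ᵥ u ≤ 1} := by
  have h : {u : Fin n → ℝ | u ⬝ᵥ u ≤ 1} ⊆ Metric.closedBall 0 1 := by
    intro u hu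
    rw [Metric.mem_closedBall, dist_zero_right]
    rw [pi_norm_le_iff_of_nonneg zero_le_one]
    intro i
    rw [Real.norm_eq_abs, abs_le_one_iff_mul_self_le_one]
    refine le_trans ?_ hu
    exact Finset.single_le_sum (f := fun j => u j * u j)
      (fun j _ => mul_self_nonneg (u j)) (Finset.mem_univ i)
  exact Metric.isBounded_closedBall.subset h

lemma volume_unitK_lt_top : volume {u : Fin n → ℝ | u ⬝ᵥ u ≤ 1} < ⊤ := by
  obtain ⟨R, hR⟩ := isBounded_unitK.subset_closedBall (0 : Fin n → ℝ)
  calc volume {u : Fin n → ℝ | u ⬝ᵥ u ≤ 1} ≤ volume (Metric.closedBall 0 R) :=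
        measure_mono hR
    _ < ⊤ := (isCompact_closedBall 0 R).measure_lt_top

lemma isBounded_ellipsoid (hC : C.PosDef) (p : Fin n → ℝ) : IsBounded (ellipsoid p C) := by
  rw [ellipsoid_image hC p]
  set Q := hC.posSemidef.sqrt
  have h1 : IsBounded ((fun u => Q *ᵥ u) '' {u : Fin n → ℝ | u ⬝ᵥ u ≤ 1}) := by
    have := (LinearMap.toContinuousLinearMap
      (Matrix.mulVecLin Q)).lipschitz.isBounded_image isBounded_unitK
    simp at this; exact this
  have h2 := ((isometry_add_left p).lipschitz.isBounded_image h1)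
  rwa [Set.image_image] at h2

lemma volume_ellipsoid_lt_top (hC : C.PosDef) (p : Fin n → ℝ) : volume (ellipsoid p C) < ⊤ := by
  rw [volume_ellipsoid hC p]
  exact ENNReal.mul_lt_top ofReal_lt_top volume_unitK_lt_top

lemma ellipsoid_subset_closure (hC : C.PosDef) (p : Fin n → ℝ) :
    ellipsoid p C ⊆ closure {y | quad C⁻¹ (y - p) < 1} := by
  intro y hy
  have hq : quad C⁻¹ (y - p) ≤ 1 := hy
  have hcont : Continuous fun t : ℝ => p + t • (y - p) := by fun_prop
  have htd : Tendsto (fun t : ℝ => p + t • (y - p)) (nhdsWithin 1 (Set.Iio 1)) (nhds y) := by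
    have h1 : Tendsto (fun t : ℝ => p + t • (y - p)) (nhds 1) (nhds (p + (1 : ℝ) • (y - p))) :=
      hcont.tendsto 1
    rw [one_smul, add_sub_cancel] at h1
    exact h1.mono_left nhdsWithin_le_nhds
  refine mem_closure_of_tendsto htd ?_
  filter_upwards [Ico_mem_nhdsLT zero_lt_one] with t ht
  have hts : quad C⁻¹ (p + t • (y - p) - p) = t ^ 2 * quad C⁻¹ (y - p) := by
    rw [add_sub_cancel_left, quad_smul]
  simp only [Set.mem_setOf_eq, hts]
  calc t ^ 2 * quad C⁻¹ (y - p) ≤ t ^ 2 * 1 := mul_le_mul_of_nonneg_left hq (sq_nonneg t)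
    _ = t ^ 2 := mul_one _
    _ < 1 := by
        rw [sq_lt_one_iff_abs_lt_one, abs_lt]
        exact ⟨by linarith [ht.1], ht.2⟩

end sqrtrep

lemma ellipsoid_subset_of_sdiff_null {p q : Fin n → ℝ} {C D : Matrix (Fin n) (Fin n) ℝ}
    (hC : C.PosDef)
    (h : volume (ellipsoid p C \ ellipsoid q D) = 0) : ellipsoid p C ⊆ ellipsoid q D := by
  intro x hx
  by_contra hxB
  have hUopen : IsOpen {y : Fin n → ℝ | quad C⁻¹ (y - p) < 1} :=
    (continuous_quad C⁻¹ p).isOpen_preimage (Set.Iio 1) isOpen_Iio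
  have hxcl : x ∈ closure {y : Fin n → ℝ | quad C⁻¹ (y - p) < 1} :=
    ellipsoid_subset_closure hC p hx
  rw [mem_closure_iff] at hxcl
  obtain ⟨y, hyO, hyU⟩ := hxcl (ellipsoid q D)ᶜ (isClosed_ellipsoid q D).isOpen_compl hxB
  set O := {y : Fin n → ℝ | quad C⁻¹ (y - p) < 1} ∩ (ellipsoid q D)ᶜ with hO
  have hOopen : IsOpen O := hUopen.inter (isClosed_ellipsoid q D).isOpen_compl
  have hOne : O.Nonempty := ⟨y, hyU, hyO⟩
  have hOsub : O ⊆ ellipsoid p C \ ellipsoid q D := by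
    rintro z ⟨hz1, hz2⟩
    exact ⟨show quad C⁻¹ (z - p) ≤ 1 from le_of_lt hz1, hz2⟩
  have := (hOopen.measure_pos volume hOne).trans_le (measure_mono hOsub)
  rw [h] at this
  exact lt_irrefl _ this

lemma center_eq_of_ellipsoid_eq {p q : Fin n → ℝ} {C D : Matrix (Fin n) (Fin n) ℝ}
    (hC : C.PosDef)
    (h : ellipsoid p C = ellipsoid q D) : p = q := by
  have hrefl : ∀ (r : Fin n → ℝ) (M : Matrix (Fin n) (Fin n) ℝ) (x : Fin n → ℝ),
      x ∈ ellipsoid r M → r + r - x ∈ ellipsoid r M := by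
    intro r M x hx
    show quad M⁻¹ (r + r - x - r) ≤ 1
    have : r + r - x - r = -(x - r) := by abel
    rw [this, quad_neg]
    exact hx
  set w := (p - q) + (p - q) with hw
  have hstep : ∀ x ∈ ellipsoid p C, x + w ∈ ellipsoid p C := by
    intro x hx
    have h1 : q + q - x ∈ ellipsoid p C := by
      rw [h]; exact hrefl q D x (h ▸ hx)
    have h2 : p + p - (q + q - x) ∈ ellipsoid p C := hrefl p C _ h1
    have : p + p - (q + q - x) = x + w := by rw [hw]; abel
    rwa [this] at h2
  have hpmem : p ∈ ellipsoid p C := by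
    show quad C⁻¹ (p - p) ≤ 1
    rw [sub_self, quad_zero]
    norm_num
  have hiter : ∀ k : ℕ, p + k • w ∈ ellipsoid p C := by
    intro k
    induction k with
    | zero => simpa using hpmem
    | succ m ih =>
        have := hstep _ ih
        rwa [add_assoc, ← succ_nsmul] at this
  by_contra hpq
  have hwne : w ≠ 0 := by
    intro h0
    rw [hw] at h0
    have hpq0 : p - q = 0 := by
      funext i
      have h0i := congrFun h0 i
      simp only [Pi.add_apply, Pi.sub_apply, Pi.zero_apply] at h0i ⊢
      linarith
    exact hpq (sub_eq_zero.mp hpq0)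
  have hwpos : 0 < ‖w‖ := norm_pos_iff.mpr hwne
  obtain ⟨R, hR⟩ := (isBounded_ellipsoid hC p).subset_closedBall (0 : Fin n → ℝ)
  obtain ⟨k, hk⟩ := exists_nat_gt ((R + ‖p‖) / ‖w‖)
  have hknorm : R + ‖p‖ < k * ‖w‖ := by
    rw [div_lt_iff₀ hwpos] at hk
    linarith
  have hmem := hR (hiter k)
  rw [Metric.mem_closedBall, dist_zero_right] at hmem
  have h1 : ‖(k : ℕ) • w‖ ≤ ‖p + k • w‖ + ‖p‖ := by
    have := norm_sub_le (p + k • w) p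
    rwa [add_sub_cancel_left] at this
  have h2 : ‖(k : ℕ) • w‖ = k * ‖w‖ := by
    have hcast : (k : ℕ) • w = (k : ℝ) • w := (Nat.cast_smul_eq_nsmul ℝ k w).symm
    rw [hcast, norm_smul]
    simp
  linarith [hmem, h1, h2]

lemma quad_le_of_ellipsoid_subset {p : Fin n → ℝ} {C D : Matrix (Fin n) (Fin n) ℝ}
    (hC : C.PosDef)
    (h : ellipsoid p C ⊆ ellipsoid p D) (z : Fin n → ℝ) : quad D⁻¹ z ≤ quad C⁻¹ z := by
  by_cases hz : z = 0
  · simp [hz, quad_zero]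
  · set α := quad C⁻¹ z with hα
    have hαpos : 0 < α := quad_pos hC.inv hz
    set t := (Real.sqrt α)⁻¹ with ht
    have htpos : 0 < t := inv_pos.mpr (Real.sqrt_pos.mpr hαpos)
    have ht2 : t ^ 2 * α = 1 := by
      rw [ht, ← Real.sqrt_inv]
      rw [Real.sq_sqrt (by positivity)]
      field_simp
    have hmem : p + t • z ∈ ellipsoid p C := by
      show quad C⁻¹ (p + t • z - p) ≤ 1
      rw [add_sub_cancel_left, quad_smul, ← hα, ht2]
    have hmem2 := h hmem
    have hq2 : quad D⁻¹ (p + t • z - p) ≤ 1 := hmem2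
    rw [add_sub_cancel_left, quad_smul] at hq2
    have ht2pos : 0 < t ^ 2 := by positivity
    have hle : t ^ 2 * quad D⁻¹ z ≤ t ^ 2 * α := by rw [ht2]; exact hq2
    exact le_of_mul_le_mul_left hle ht2pos

lemma eq_of_quad_eq {M N : Matrix (Fin n) (Fin n) ℝ} (hM : Mᵀ = M) (hN : Nᵀ = N)
    (h : ∀ z : Fin n → ℝ, quad M z = quad N z) : M = N := by
  have key : ∀ (P : Matrix (Fin n) (Fin n) ℝ) (a b : Fin n),
      (Pi.single a (1 : ℝ)) ⬝ᵥ (P *ᵥ Pi.single b 1) = P a b := by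
    intro P a b
    rw [single_dotProduct, one_mul, mulVec_single]
    simp
  ext i j
  have h1 := h (Pi.single i 1)
  have h2 := h (Pi.single j 1)
  have h3 := h (Pi.single i 1 + Pi.single j 1)
  simp only [quad, mulVec_add, dotProduct_add, add_dotProduct, key] at h1 h2 h3
  have hMs : M j i = M i j := by conv_lhs => rw [← hM, transpose_apply]
  have hNs : N j i = N i j := by conv_lhs => rw [← hN, transpose_apply]
  rw [hMs, hNs] at h3
  linarith

lemma matrix_eq_of_ellipsoid_eq {p : Fin n → ℝ} {C D : Matrix (Fin n) (Fin n) ℝ}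
    (hC : C.PosDef) (hD : D.PosDef)
    (h : ellipsoid p C = ellipsoid p D) : C = D := by
  have h1 : ∀ z, quad D⁻¹ z ≤ quad C⁻¹ z := quad_le_of_ellipsoid_subset hC h.le
  have h2 : ∀ z, quad C⁻¹ z ≤ quad D⁻¹ z := quad_le_of_ellipsoid_subset hD h.ge
  have hinv : C⁻¹ = D⁻¹ :=
    eq_of_quad_eq (transpose_eq_of_herm hC.inv.1) (transpose_eq_of_herm hD.inv.1)
      (fun z => le_antisymm (h2 z) (h1 z))
  calc C = C⁻¹⁻¹ := (Matrix.nonsing_inv_nonsing_inv C (isUnit_iff_ne_zero.mpr hC.det_pos.ne')).symm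
    _ = D⁻¹⁻¹ := by rw [hinv]
    _ = D := Matrix.nonsing_inv_nonsing_inv D (isUnit_iff_ne_zero.mpr hD.det_pos.ne')

lemma posdef_smul {S : Matrix (Fin n) (Fin n) ℝ} (hS : S.PosDef) {c : ℝ} (hc : 0 < c) :
    (c • S).PosDef := by
  refine Matrix.PosDef.of_dotProduct_mulVec_pos ?_ ?_
  · show (c • S)ᴴ = c • S
    rw [conjTranspose_smul, hS.1.eq]
    simp
  · intro x hx
    have hq := hS.dotProduct_mulVec_pos hx
    have : star x ⬝ᵥ (c • S) *ᵥ x = c * (star x ⬝ᵥ S *ᵥ x) := by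
      rw [smul_mulVec, dotProduct_smul, smul_eq_mul]
    rw [this]
    positivity

lemma inv_smul' {S : Matrix (Fin n) (Fin n) ℝ} (hS : S.PosDef) {c : ℝ} (hc : 0 < c) :
    (c • S)⁻¹ = c⁻¹ • S⁻¹ := by
  have : Invertible c := invertibleOfNonzero hc.ne'
  have h := Matrix.inv_smul (A := S) c (isUnit_iff_ne_zero.mpr hS.det_pos.ne')
  rw [h, invOf_eq_inv]

end GaussAux
/-- The density of the multivariate Gaussian `N(μ, S)` on `ℝ^n`. -/
noncomputable def gaussianPdf {n : ℕ} (μ : Fin n → ℝ) (S : Matrix (Fin n) (Fin n) ℝ)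
    (y : Fin n → ℝ) : ℝ :=
  ((2 * Real.pi) ^ n * S.det) ^ (-(1 : ℝ) / 2) *
    Real.exp (-(1 / 2) * ((y - μ) ⬝ᵥ (S⁻¹ *ᵥ (y - μ))))

/-- The multivariate Gaussian measure `N(μ, S)` on `ℝ^n`. -/
noncomputable def gaussianMeasure {n : ℕ} (μ : Fin n → ℝ) (S : Matrix (Fin n) (Fin n) ℝ) :
    Measure (Fin n → ℝ) :=
  volume.withDensity fun y => ENNReal.ofReal (gaussianPdf μ S y)

/-- The chi-square distribution with `n` degrees of freedom. -/
noncomputable def chiSquareMeasure (n : ℕ) : Measure ℝ :=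
  ProbabilityTheory.gammaMeasure ((n : ℝ) / 2) (1 / 2)

/-- The CDF of the chi-square distribution with `n` degrees of freedom. -/
noncomputable def chiSquareCDF (n : ℕ) (t : ℝ) : ℝ := (chiSquareMeasure n (Set.Iic t)).toReal

/-- The quantile function (generalized inverse CDF) of the chi-square distribution. -/
noncomputable def chiSquareQuantile (n : ℕ) (η : ℝ) : ℝ :=
  sInf {t : ℝ | η ≤ chiSquareCDF n t}
/-- Among all ellipsoids `E(μ', C)` with fixed determinant `det C = v` (hence fixed volume),
the Gaussian probability `Pr[y ∈ E(μ', C)]` for `y ~ N(μ, S)` is uniquely maximized at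
`μ' = μ` and `C = κ • S` with `κ = (v / det S)^{1/n}`. -/
theorem gaussian_prob_max_det_constraint {n : ℕ} (μ : Fin n → ℝ)
    (S : Matrix (Fin n) (Fin n) ℝ) (hS : S.PosDef) (v : ℝ) (hv : 0 < v) :
    (∀ (μ' : Fin n → ℝ) (C : Matrix (Fin n) (Fin n) ℝ), C.PosDef → C.det = v →
        gaussianMeasure μ S (ellipsoid μ' C) ≤
          gaussianMeasure μ S (ellipsoid μ ((v / S.det) ^ ((1 : ℝ) / n) • S))) ∧
      (∀ (μ' : Fin n → ℝ) (C : Matrix (Fin n) (Fin n) ℝ), C.PosDef → C.det = v →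
        gaussianMeasure μ S (ellipsoid μ' C) =
          gaussianMeasure μ S (ellipsoid μ ((v / S.det) ^ ((1 : ℝ) / n) • S)) →
          μ' = μ ∧ C = (v / S.det) ^ ((1 : ℝ) / n) • S) := by
  classical
  rcases Nat.eq_zero_or_pos n with hn0 | hnpos
  · subst hn0
    have hset : ∀ (p : Fin 0 → ℝ) (C : Matrix (Fin 0) (Fin 0) ℝ), ellipsoid p C = Set.univ := by
      intro p C
      ext y
      simp [ellipsoid, dotProduct]
    constructor
    · intro μ' C _ _
      rw [hset, hset]
    · intro μ' C _ _ _
      refine ⟨funext fun i => i.elim0, ?_⟩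
      ext i j
      exact i.elim0
  have hn : n ≠ 0 := hnpos.ne'
  have hdS : 0 < S.det := hS.det_pos
  set κ := (v / S.det) ^ ((1 : ℝ) / n) with hκdef
  have hκpos : 0 < κ := Real.rpow_pos_of_pos (by positivity) _
  set D := κ • S with hDdef
  have hD : D.PosDef := GaussAux.posdef_smul hS hκpos
  have hDdet : D.det = v := by
    rw [hDdef, Matrix.det_smul, Fintype.card_fin]
    have hκn : κ ^ (n : ℕ) = v / S.det := by
      rw [hκdef, one_div, Real.rpow_inv_natCast_pow (by positivity) hn]
    rw [hκn]
    field_simp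
  -- the density
  set a := ((2 * Real.pi) ^ n * S.det) ^ (-(1 : ℝ) / 2) with hadef
  have hapos : 0 < a := by
    rw [hadef]
    apply Real.rpow_pos_of_pos
    have := Real.pi_pos
    positivity
  set w := fun y : Fin n → ℝ => GaussAux.quad S⁻¹ (y - μ) with hwdef
  have hpdf : ∀ y, gaussianPdf μ S y = a * Real.exp (-(1 / 2) * w y) := fun _ => rfl
  have hwnonneg : ∀ y, 0 ≤ w y := fun y => GaussAux.quad_nonneg hS.inv _
  set g := fun y : Fin n → ℝ => ENNReal.ofReal (gaussianPdf μ S y) with hgdef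
  have hcont : Continuous (gaussianPdf μ S) := by
    unfold gaussianPdf
    exact continuous_const.mul
      (Real.continuous_exp.comp (continuous_const.mul (GaussAux.continuous_quad S⁻¹ μ)))
  have hgmeas : Measurable g := hcont.measurable.ennreal_ofReal
  have happly : ∀ (p : Fin n → ℝ) (C : Matrix (Fin n) (Fin n) ℝ),
      gaussianMeasure μ S (ellipsoid p C) = ∫⁻ y in ellipsoid p C, g y := by
    intro p C
    rw [gaussianMeasure, withDensity_apply _ (GaussAux.measurableSet_ellipsoid p C)]
  -- membership in the optimal ellipsoid
  have hBiff : ∀ y, y ∈ ellipsoid μ D ↔ w y ≤ κ := by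
    intro y
    rw [GaussAux.ellipsoid_def, Set.mem_setOf_eq, hDdef, GaussAux.inv_smul' hS hκpos,
      GaussAux.quad_smul_mat, inv_mul_eq_div, div_le_one hκpos]
  set c := ENNReal.ofReal (a * Real.exp (-(1 / 2) * κ)) with hcdef
  have hgB : ∀ y ∈ ellipsoid μ D, c ≤ g y := by
    intro y hy
    show c ≤ ENNReal.ofReal (gaussianPdf μ S y)
    rw [hpdf y, hcdef]
    apply ENNReal.ofReal_le_ofReal
    apply mul_le_mul_of_nonneg_left _ hapos.le
    apply Real.exp_le_exp.mpr
    have := (hBiff y).mp hy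
    nlinarith
  have hgnotB : ∀ y, y ∉ ellipsoid μ D → g y < c := by
    intro y hy
    have hκw : κ < w y := by
      by_contra hle
      exact hy ((hBiff y).mpr (not_lt.mp hle))
    show ENNReal.ofReal (gaussianPdf μ S y) < c
    rw [hpdf y, hcdef]
    rw [ENNReal.ofReal_lt_ofReal_iff (by positivity)]
    apply mul_lt_mul_of_pos_left _ hapos
    apply Real.exp_lt_exp.mpr
    nlinarith
  have hbound : ∀ s : Set (Fin n → ℝ), ∫⁻ y in s, g y ≤ ENNReal.ofReal a * volume s := by
    intro s
    calc ∫⁻ y in s, g y ≤ ∫⁻ _ in s, ENNReal.ofReal a := by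
          apply setLIntegral_mono measurable_const
          intro y _
          show ENNReal.ofReal (gaussianPdf μ S y) ≤ ENNReal.ofReal a
          rw [hpdf y]
          apply ENNReal.ofReal_le_ofReal
          have h1 : Real.exp (-(1 / 2) * w y) ≤ 1 := by
            rw [Real.exp_le_one_iff]
            nlinarith [hwnonneg y]
          nlinarith [hapos.le]
      _ = ENNReal.ofReal a * volume s := setLIntegral_const s _
  -- the key claim
  have key : ∀ (μ' : Fin n → ℝ) (C : Matrix (Fin n) (Fin n) ℝ), C.PosDef → C.det = v →
      (∫⁻ y in ellipsoid μ' C, g y) ≤ (∫⁻ y in ellipsoid μ D, g y) ∧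
      ((∫⁻ y in ellipsoid μ' C, g y) = (∫⁻ y in ellipsoid μ D, g y) →
        ellipsoid μ' C = ellipsoid μ D) := by
    intro μ' C hC hCdet
    set A := ellipsoid μ' C with hAdef
    set B := ellipsoid μ D with hBdef
    have hAm : MeasurableSet A := GaussAux.measurableSet_ellipsoid μ' C
    have hBm : MeasurableSet B := GaussAux.measurableSet_ellipsoid μ D
    have hAfin : volume A < ⊤ := GaussAux.volume_ellipsoid_lt_top hC μ'
    have hBfin : volume B < ⊤ := GaussAux.volume_ellipsoid_lt_top hD μ
    have hvolAB : volume A = volume B := by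
      rw [hAdef, hBdef, GaussAux.volume_ellipsoid hC μ', GaussAux.volume_ellipsoid hD μ,
        hCdet, hDdet]
    have hsplitA : (∫⁻ y in A ∩ B, g y) + (∫⁻ y in A \ B, g y) = ∫⁻ y in A, g y :=
      lintegral_inter_add_diff g A hBm
    have hsplitB : (∫⁻ y in A ∩ B, g y) + (∫⁻ y in B \ A, g y) = ∫⁻ y in B, g y := by
      rw [Set.inter_comm]
      exact lintegral_inter_add_diff g B hAm
    have hIfin : (∫⁻ y in A ∩ B, g y) ≠ ⊤ := by
      refine ((hbound _).trans_lt ?_).ne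
      exact ENNReal.mul_lt_top ENNReal.ofReal_lt_top
        (lt_of_le_of_lt (measure_mono Set.inter_subset_left) hAfin)
    have hvol_diff : volume (A \ B) = volume (B \ A) := by
      have hA2 : volume (A ∩ B) + volume (A \ B) = volume A := measure_inter_add_diff A hBm
      have hB2 : volume (B ∩ A) + volume (B \ A) = volume B := measure_inter_add_diff B hAm
      rw [Set.inter_comm] at hB2
      have hABfin : volume (A ∩ B) ≠ ⊤ :=
        (lt_of_le_of_lt (measure_mono Set.inter_subset_left) hAfin).ne
      rw [← ENNReal.add_right_inj hABfin, hA2, hB2, hvolAB]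
    have hd1 : (∫⁻ y in A \ B, g y) ≤ c * volume (A \ B) := by
      calc (∫⁻ y in A \ B, g y) ≤ ∫⁻ _ in A \ B, c :=
            setLIntegral_mono measurable_const (fun y hy => (hgnotB y hy.2).le)
        _ = c * volume (A \ B) := setLIntegral_const _ _
    have hd2 : c * volume (B \ A) ≤ ∫⁻ y in B \ A, g y := by
      calc c * volume (B \ A) = ∫⁻ _ in B \ A, c := (setLIntegral_const _ _).symm
        _ ≤ ∫⁻ y in B \ A, g y := setLIntegral_mono hgmeas (fun y hy => hgB y hy.1)
    constructor
    · calc (∫⁻ y in A, g y) = (∫⁻ y in A ∩ B, g y) + (∫⁻ y in A \ B, g y) := hsplitA.symm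
        _ ≤ (∫⁻ y in A ∩ B, g y) + c * volume (A \ B) := add_le_add_right hd1 _
        _ = (∫⁻ y in A ∩ B, g y) + c * volume (B \ A) := by rw [hvol_diff]
        _ ≤ (∫⁻ y in A ∩ B, g y) + (∫⁻ y in B \ A, g y) := add_le_add_right hd2 _
        _ = ∫⁻ y in B, g y := hsplitB
    · intro hEq
      by_cases hz : volume (A \ B) = 0
      · have hz2 : volume (B \ A) = 0 := by rw [← hvol_diff]; exact hz
        exact Set.Subset.antisymm (GaussAux.ellipsoid_subset_of_sdiff_null hC hz)
          (GaussAux.ellipsoid_subset_of_sdiff_null hD hz2)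
      · exfalso
        have hfi : (∫⁻ y in A \ B, g y) ≠ ⊤ := by
          refine ((hbound _).trans_lt ?_).ne
          exact ENNReal.mul_lt_top ENNReal.ofReal_lt_top
            (lt_of_le_of_lt (measure_mono Set.diff_subset) hAfin)
        have hstrict : (∫⁻ y in A \ B, g y) < c * volume (A \ B) := by
          have := setLIntegral_strict_mono (hAm.diff hBm) hz measurable_const hfi
            (MeasureTheory.ae_of_all _ (fun y hy => hgnotB y hy.2))
          rwa [setLIntegral_const] at this
        have hlt : (∫⁻ y in A, g y) < ∫⁻ y in B, g y := by
          calc (∫⁻ y in A, g y) = (∫⁻ y in A ∩ B, g y) + (∫⁻ y in A \ B, g y) := hsplitA.symm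
            _ < (∫⁻ y in A ∩ B, g y) + c * volume (A \ B) :=
                ENNReal.add_lt_add_left hIfin hstrict
            _ = (∫⁻ y in A ∩ B, g y) + c * volume (B \ A) := by rw [hvol_diff]
            _ ≤ (∫⁻ y in A ∩ B, g y) + (∫⁻ y in B \ A, g y) := add_le_add_right hd2 _
            _ = ∫⁻ y in B, g y := hsplitB
        exact hlt.ne hEq
  constructor
  · intro μ' C hC hCdet
    rw [happly, happly]
    exact (key μ' C hC hCdet).1
  · intro μ' C hC hCdet hEq
    rw [happly, happly] at hEq
    have hsets := (key μ' C hC hCdet).2 hEq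
    have hcenter : μ' = μ := GaussAux.center_eq_of_ellipsoid_eq hC hsets
    subst hcenter
    exact ⟨rfl, GaussAux.matrix_eq_of_ellipsoid_eq hC hD hsets⟩
end

section
/- Let α_1, …, α_m be i.i.d. real random variables with continuous distribution, and let α be a fresh independent sample from the same distribution. Let α_(q) be the ⌈(m+1)η⌉-th smallest among α_1,…,α_m, where ⌈(m+1)η⌉ ≤ m. Then Pr[α ≤ α_(q)] ≥ η. -/
open MeasureTheory ENNReal

/-- The `k`-th smallest value (1-indexed order statistic) of `f : Fin m → ℝ`. -/
noncomputable def kthSmallest (m : ℕ) (k : ℕ) (f : Fin m → ℝ) : ℝ :=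
  sInf {t : ℝ | k ≤ (Finset.univ.filter fun i => f i ≤ t).card}

open Finset in
/-- Reindexing a filter over `univ` by a permutation preserves the cardinality. -/
lemma card_filter_comp_perm {n : ℕ} (p : Fin n → Prop) [DecidablePred p] (σ : Equiv.Perm (Fin n)) :
    ((univ : Finset (Fin n)).filter fun t => p (σ t)).card
      = ((univ : Finset (Fin n)).filter p).card := by
  apply Finset.card_nbij' σ σ.symm <;> intro a ha <;> simp_all

open Finset in
lemma card_filter_fin_lt {n k : ℕ} (hkn : k ≤ n) :
    ((univ : Finset (Fin n)).filter fun v : Fin n => (v : ℕ) < k).card = k := by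
  have : ((univ : Finset (Fin n)).filter fun v : Fin n => (v : ℕ) < k)
      = (univ : Finset (Fin k)).map (Fin.castLEEmb hkn) := by
    ext v
    simp only [mem_filter, mem_univ, true_and, mem_map, Fin.castLEEmb, Function.Embedding.coeFn_mk]
    constructor
    · intro h; exact ⟨⟨v, h⟩, rfl⟩
    · rintro ⟨w, rfl⟩; exact w.2
  rw [this, card_map, card_univ, Fintype.card_fin]

open Finset in
/-- For injective `x`, exactly `k` indices have strict rank `< k`. -/
lemma count_ranks {n k : ℕ} (hk : k ≤ n) (x : Fin n → ℝ) (hx : Function.Injective x) :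
    ((univ : Finset (Fin n)).filter fun i =>
      ((univ : Finset (Fin n)).filter fun t => x t < x i).card < k).card = k := by
  set c : Fin n → ℕ := fun i => ((univ : Finset (Fin n)).filter fun t => x t < x i).card with hc
  have hmono : ∀ i j, x i < x j → c i < c j := by
    intro i j hij
    apply Finset.card_lt_card
    constructor
    · intro t ht
      simp only [mem_filter, mem_univ, true_and] at ht ⊢
      exact ht.trans hij
    · intro hsub
      have := hsub (by simp [hij] : i ∈ (univ : Finset (Fin n)).filter fun t => x t < x j)
      simp at this
  have hlt : ∀ i, c i < n := by
    intro i
    have hss : (univ : Finset (Fin n)).filter (fun t => x t < x i) ⊆ univ.erase i := by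
      intro t ht
      simp only [mem_filter, mem_univ, true_and] at ht
      exact Finset.mem_erase.mpr ⟨fun h => absurd (h ▸ ht) (lt_irrefl _), mem_univ t⟩
    calc c i ≤ (univ.erase i).card := Finset.card_le_card hss
    _ < n := by
        rw [Finset.card_erase_of_mem (mem_univ i), card_univ, Fintype.card_fin]
        exact Nat.sub_lt i.pos Nat.one_pos
  set e : Fin n → Fin n := fun i => ⟨c i, hlt i⟩ with he
  have einj : Function.Injective e := by
    intro i j hij
    by_contra hne
    rcases lt_or_gt_of_ne (fun h : x i = x j => hne (hx h)) with h | h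
    · exact absurd (congrArg Fin.val hij) (Nat.ne_of_lt (hmono _ _ h))
    · exact absurd (congrArg Fin.val hij).symm (Nat.ne_of_lt (hmono _ _ h))
  set E := Equiv.ofBijective e (Finite.injective_iff_bijective.mp einj) with hE
  have key : ((univ : Finset (Fin n)).filter fun i => c i < k).card
      = ((univ : Finset (Fin n)).filter fun v : Fin n => (v : ℕ) < k).card := by
    apply Finset.card_nbij' E E.symm
    · intro a ha
      simp only [mem_coe, mem_filter, mem_univ, true_and] at ha ⊢
      simpa [hE, Equiv.ofBijective] using ha
    · intro b hb
      simp only [mem_coe, mem_filter, mem_univ, true_and] at hb ⊢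
      have : c (E.symm b) = ((E (E.symm b) : Fin n) : ℕ) := rfl
      rw [this, Equiv.apply_symm_apply]
      exact hb
    · intro a _; exact E.symm_apply_apply a
    · intro b _; exact E.apply_symm_apply b
  rw [key, card_filter_fin_lt hk]

open Finset in
/-- Characterization of being below the `k`-th order statistic via strict counts. -/
lemma le_kthSmallest_iff {m k : ℕ} (hk1 : 1 ≤ k) (hkm : k ≤ m) (f : Fin m → ℝ) (a : ℝ) :
    a ≤ kthSmallest m k f ↔ ((univ : Finset (Fin m)).filter fun i => f i < a).card < k := by
  have hm : 0 < m := lt_of_lt_of_le hk1 hkm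
  have hne : (univ : Finset (Fin m)).Nonempty := univ_nonempty_iff.mpr ⟨⟨0, hm⟩⟩
  set S : Set ℝ := {t : ℝ | k ≤ ((univ : Finset (Fin m)).filter fun i => f i ≤ t).card} with hS
  have hSne : S.Nonempty := by
    refine ⟨univ.sup' hne f, ?_⟩
    have : (univ : Finset (Fin m)).filter (fun i => f i ≤ univ.sup' hne f) = univ := by
      apply Finset.filter_true_of_mem
      intro i _
      exact Finset.le_sup' f (mem_univ i)
    simp only [hS, Set.mem_setOf_eq, this, card_univ, Fintype.card_fin]
    exact hkm
  have hSbdd : BddBelow S := by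
    refine ⟨univ.inf' hne f, ?_⟩
    intro t ht
    simp only [hS, Set.mem_setOf_eq] at ht
    have hfne : ((univ : Finset (Fin m)).filter fun i => f i ≤ t).Nonempty := by
      rw [← Finset.card_pos]; omega
    obtain ⟨i, hi⟩ := hfne
    simp only [mem_filter, mem_univ, true_and] at hi
    exact le_trans (Finset.inf'_le f (mem_univ i)) hi
  constructor
  · intro hav
    by_contra hcard
    push_neg at hcard
    set T := (univ : Finset (Fin m)).filter fun i => f i < a with hT
    have hTne : T.Nonempty := by rw [← Finset.card_pos]; omega
    set u := T.sup' hTne f with hu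
    have hua : u < a := by
      rw [Finset.sup'_lt_iff]
      intro i hi
      simp only [hT, mem_filter, mem_univ, true_and] at hi
      exact hi
    have huS : u ∈ S := by
      simp only [hS, Set.mem_setOf_eq]
      refine le_trans hcard (Finset.card_le_card ?_)
      intro i hi
      simp only [mem_filter, mem_univ, true_and]
      exact Finset.le_sup' f hi
    have : kthSmallest m k f ≤ u := csInf_le hSbdd huS
    linarith
  · intro hcard
    apply le_csInf hSne
    intro t ht
    simp only [hS, Set.mem_setOf_eq] at ht
    by_contra hta
    push_neg at hta
    have hsub : (univ : Finset (Fin m)).filter (fun i => f i ≤ t)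
        ⊆ (univ : Finset (Fin m)).filter fun i => f i < a := by
      intro i hi
      simp only [mem_filter, mem_univ, true_and] at hi ⊢
      exact lt_of_le_of_lt hi hta
    have := Finset.card_le_card hsub
    omega

open Finset in
lemma card_filter_lt_last (m : ℕ) (x : Fin (m + 1) → ℝ) :
    ((univ : Finset (Fin (m + 1))).filter fun t => x t < x (Fin.last m)).card
      = ((univ : Finset (Fin m)).filter fun i => x i.castSucc < x (Fin.last m)).card := by
  rw [Finset.card_filter, Finset.card_filter, Fin.sum_univ_castSucc, if_neg (lt_irrefl _), add_zero]

/-- The product measure is invariant under coordinate permutations. -/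
lemma pi_map_perm {n : ℕ} (ν : Measure ℝ) [SigmaFinite ν] (σ : Equiv.Perm (Fin n)) :
    MeasurePreserving (fun x : Fin n → ℝ => fun i => x (σ i))
      (Measure.pi fun _ => ν) (Measure.pi fun _ => ν) := by
  have h := measurePreserving_piCongrLeft (fun _ : Fin n => ν) σ.symm
  have hfun : ⇑(MeasurableEquiv.piCongrLeft (fun _ : Fin n => ℝ) σ.symm)
      = fun x : Fin n → ℝ => fun i => x (σ i) := by
    funext x i
    rw [MeasurableEquiv.coe_piCongrLeft, Equiv.piCongrLeft_apply_eq_cast]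
    exact (eq_of_heq (cast_heq _ _)).trans (by simp)
  rwa [hfun] at h

open Set in
/-- Two distinct coordinates of a product of atomless measures are a.s. different. -/
lemma diag_null {n : ℕ} (ν : Measure ℝ) [IsProbabilityMeasure ν] (hν : ∀ x : ℝ, ν {x} = 0)
    {i j : Fin n} (hij : i ≠ j) :
    Measure.pi (fun _ : Fin n => ν) {x | x i = x j} = 0 := by
  set g : (Fin n → ℝ) → ℝ × ℝ := fun x => (x i, x j) with hg
  have hgm : Measurable g := (measurable_pi_apply i).prodMk (measurable_pi_apply j)
  have hmap : (Measure.pi (fun _ : Fin n => ν)).map g = ν.prod ν := by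
    refine (Measure.prod_eq fun s t hs ht => ?_).symm
    rw [Measure.map_apply hgm (hs.prod ht)]
    have hpre : g ⁻¹' (s ×ˢ t)
        = Set.pi univ (Function.update (Function.update (fun _ : Fin n => (univ : Set ℝ)) i s) j t) := by
      ext x
      simp only [hg, Set.mem_preimage, Set.mem_prod, Set.mem_pi, Set.mem_univ, forall_true_left]
      constructor
      · rintro ⟨h1, h2⟩ l
        rcases eq_or_ne l j with rfl | hlj
        · simpa [Function.update] using h2
        · rcases eq_or_ne l i with rfl | hli
          · simp [Function.update, hlj, hij, h1]
          · simp [Function.update, hlj, hli]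
      · intro h
        refine ⟨?_, ?_⟩
        · have := h i
          simpa [Function.update, hij] using this
        · have := h j
          simpa [Function.update] using this
    rw [hpre, Measure.pi_pi]
    have hfe : (fun l => ν (Function.update (Function.update (fun _ : Fin n => (univ : Set ℝ)) i s) j t l))
        = Function.update (Function.update (fun _ : Fin n => ν univ) i (ν s)) j (ν t) := by
      funext l
      rcases eq_or_ne l j with rfl | hlj
      · simp [Function.update]
      · rcases eq_or_ne l i with rfl | hli
        · simp [Function.update, hlj]
        · simp [Function.update, hlj, hli]
    calc ∏ l, ν (Function.update (Function.update (fun _ : Fin n => (univ : Set ℝ)) i s) j t l)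
        = ∏ l, Function.update (Function.update (fun _ : Fin n => ν univ) i (ν s)) j (ν t) l := by
          rw [hfe]
    _ = ν s * ν t := by
        rw [Finset.prod_update_of_mem (Finset.mem_univ j),
          Finset.prod_update_of_mem (Finset.mem_sdiff.mpr ⟨Finset.mem_univ i, by simp [hij]⟩)]
        simp [measure_univ, mul_comm]
  have hD : MeasurableSet {p : ℝ × ℝ | p.1 = p.2} :=
    measurableSet_eq_fun measurable_fst measurable_snd
  have hset : {x : Fin n → ℝ | x i = x j} = g ⁻¹' {p : ℝ × ℝ | p.1 = p.2} := rfl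
  rw [hset, ← Measure.map_apply hgm hD, hmap, Measure.prod_apply hD]
  have hz : ∀ a : ℝ, ν (Prod.mk a ⁻¹' {p : ℝ × ℝ | p.1 = p.2}) = 0 := by
    intro a
    have : Prod.mk a ⁻¹' {p : ℝ × ℝ | p.1 = p.2} = {a} := by
      ext b; simp [eq_comm]
    rw [this, hν]
  rw [lintegral_congr hz, lintegral_zero]

/-- Split conformal calibration guarantee: if `α₁, …, α_m, α` are i.i.d. with a continuous
(atomless) common distribution `ν` and `k = ⌈(m+1)η⌉ ≤ m`, then the fresh sample `α`
is at most the `k`-th order statistic of `α₁, …, α_m` with probability at least `η`. -/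
theorem conformal_calibration {Ω : Type*} [MeasurableSpace Ω] (P : Measure Ω)
    [IsProbabilityMeasure P] (m : ℕ) (s : Fin (m + 1) → Ω → ℝ)
    (ν : Measure ℝ) [IsProbabilityMeasure ν] (hν : ∀ x : ℝ, ν {x} = 0)
    (hmeas : ∀ i, Measurable (s i))
    (hiid : P.map (fun ω => fun i => s i ω) = Measure.pi fun _ : Fin (m + 1) => ν)
    (η : ℝ) (hη : η ∈ Set.Ioo (0 : ℝ) 1)
    (hk : ⌈((m : ℝ) + 1) * η⌉₊ ≤ m) :
    ENNReal.ofReal η ≤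
      P {ω | s (Fin.last m) ω ≤
        kthSmallest m ⌈((m : ℝ) + 1) * η⌉₊ fun i : Fin m => s i.castSucc ω} := by
  classical
  obtain ⟨hη0, hη1⟩ := hη
  set k := ⌈((m : ℝ) + 1) * η⌉₊ with hkdef
  have hk1 : 1 ≤ k := Nat.ceil_pos.mpr (by positivity)
  have hkm1 : k ≤ m + 1 := hk.trans (Nat.le_succ m)
  set μ : Measure (Fin (m + 1) → ℝ) := Measure.pi fun _ : Fin (m + 1) => ν with hμ
  have hFm : Measurable (fun ω => fun i => s i ω : Ω → Fin (m + 1) → ℝ) :=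
    measurable_pi_lambda _ hmeas
  set H : Fin (m + 1) → Set (Fin (m + 1) → ℝ) := fun i =>
    {x | ((Finset.univ.filter fun t => x t < x i).card) < k} with hH
  have hcm : ∀ i, Measurable fun x : Fin (m + 1) → ℝ =>
      ((Finset.univ.filter fun t => x t < x i).card) := by
    intro i
    simp only [Finset.card_filter]
    exact Finset.measurable_sum _ fun t _ =>
      Measurable.ite (measurableSet_lt (measurable_pi_apply t) (measurable_pi_apply i))
        measurable_const measurable_const
  have hHmeas : ∀ i, MeasurableSet (H i) := by
    intro i
    exact hcm i (show MeasurableSet (Set.Iio k) from trivial)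
  -- all H i have the same measure
  have hperm : ∀ i : Fin (m + 1), μ (H i) = μ (H (Fin.last m)) := by
    intro i
    have hmp := pi_map_perm ν (Equiv.swap i (Fin.last m))
    have hpre : (fun x : Fin (m + 1) → ℝ => fun l => x (Equiv.swap i (Fin.last m) l))
        ⁻¹' H (Fin.last m) = H i := by
      ext x
      simp only [hH, Set.mem_preimage, Set.mem_setOf_eq]
      simp only [Equiv.swap_apply_right]
      rw [card_filter_comp_perm (fun t => x t < x i) (Equiv.swap i (Fin.last m))]
    rw [← hpre, hmp.measure_preimage (hHmeas (Fin.last m)).nullMeasurableSet]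
  -- a.e. injectivity
  have hinj_ae : ∀ᵐ x ∂μ, Function.Injective x := by
    rw [ae_iff]
    refine measure_mono_null (fun x hx => ?_)
      (measure_iUnion_null fun i : Fin (m + 1) => measure_iUnion_null fun j =>
        measure_iUnion_null fun hij : i ≠ j => diag_null ν hν hij)
    simp only [Set.mem_setOf_eq, Function.Injective, not_forall] at hx
    obtain ⟨i, j, hxij, hij⟩ := hx
    exact Set.mem_iUnion.mpr ⟨i, Set.mem_iUnion.mpr ⟨j, Set.mem_iUnion.mpr ⟨hij, hxij⟩⟩⟩
  -- sum of the measures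
  have hsum : ∑ i : Fin (m + 1), μ (H i) = (k : ℝ≥0∞) := by
    calc ∑ i : Fin (m + 1), μ (H i)
        = ∫⁻ x, ∑ i : Fin (m + 1), Set.indicator (H i) (fun _ => (1 : ℝ≥0∞)) x ∂μ := by
          rw [lintegral_finset_sum _ fun i _ => measurable_const.indicator (hHmeas i)]
          refine Finset.sum_congr rfl fun i _ => ?_
          rw [lintegral_indicator (hHmeas i)]
          simp
    _ = ∫⁻ _, (k : ℝ≥0∞) ∂μ := by
          refine lintegral_congr_ae ?_
          filter_upwards [hinj_ae] with x hx
          have hcnt := count_ranks hkm1 x hx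
          have hcast : ∑ i : Fin (m + 1),
              (if ((Finset.univ.filter fun t => x t < x i).card) < k then (1 : ℝ≥0∞) else 0)
              = (((Finset.univ.filter fun i : Fin (m + 1) =>
                  ((Finset.univ.filter fun t => x t < x i).card) < k).card : ℕ) : ℝ≥0∞) := by
            rw [Finset.card_filter, Nat.cast_sum]
            exact Finset.sum_congr rfl fun i _ => by split <;> simp
          simp only [Set.indicator_apply, hH, Set.mem_setOf_eq]
          rw [hcast, hcnt]
    _ = (k : ℝ≥0∞) := by
          have : IsProbabilityMeasure μ := by rw [hμ]; infer_instance
          simp [lintegral_const, measure_univ]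
  have hlast : ((m : ℝ≥0∞) + 1) * μ (H (Fin.last m)) = (k : ℝ≥0∞) := by
    calc ((m : ℝ≥0∞) + 1) * μ (H (Fin.last m))
        = ∑ _i : Fin (m + 1), μ (H (Fin.last m)) := by
          rw [Finset.sum_const, Finset.card_univ, Fintype.card_fin, nsmul_eq_mul]
          push_cast
          ring
    _ = ∑ i : Fin (m + 1), μ (H i) := Finset.sum_congr rfl fun i _ => (hperm i).symm
    _ = (k : ℝ≥0∞) := hsum
  -- identify the event
  have hevent : {ω | s (Fin.last m) ω ≤ kthSmallest m k fun i : Fin m => s i.castSucc ω}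
      = (fun ω => fun i => s i ω) ⁻¹' H (Fin.last m) := by
    ext ω
    simp only [Set.mem_setOf_eq, Set.mem_preimage, hH]
    rw [le_kthSmallest_iff hk1 hk, card_filter_lt_last m (fun i => s i ω)]
  have hP : P {ω | s (Fin.last m) ω ≤ kthSmallest m k fun i : Fin m => s i.castSucc ω}
      = μ (H (Fin.last m)) := by
    rw [hevent, ← Measure.map_apply hFm (hHmeas (Fin.last m)), hiid, hμ]
  rw [hP]
  have hmul : ((m : ℝ≥0∞) + 1) * ENNReal.ofReal η ≤ ((m : ℝ≥0∞) + 1) * μ (H (Fin.last m)) := by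
    rw [hlast]
    calc ((m : ℝ≥0∞) + 1) * ENNReal.ofReal η = ENNReal.ofReal (((m : ℝ) + 1) * η) := by
          rw [ENNReal.ofReal_mul (by positivity), ENNReal.ofReal_add (by positivity) zero_le_one,
            ENNReal.ofReal_natCast, ENNReal.ofReal_one]
    _ ≤ (k : ℝ≥0∞) := by
          rw [← ENNReal.ofReal_natCast k]
          exact ENNReal.ofReal_le_ofReal (Nat.le_ceil _)
  exact (ENNReal.mul_le_mul_iff_right (by simp) (by
    exact ENNReal.add_ne_top.mpr ⟨ENNReal.natCast_ne_top m, ENNReal.one_ne_top⟩)).mp hmul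
end
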